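/- Let H be a finite-dimensional Hopf algebra over a field k. Then its space of left integrals {μ ∈ H : h μ = ε(h) μ for all h} is one-dimensional. -/

import Mathlib

open TensorProduct Coalgebra LinearMap

namespace LeftIntegralsProof

variable {k H : Type*} [Field k] [Ring H] [HopfAlgebra k H]

local notation "ε" => Coalgebra.counit (R := k) (A := H)
local notation "Δ" => Coalgebra.comul (R := k) (A := H)
local notation "S" => HopfAlgebra.antipode (R := k) (A := H)

/-- product of two representations -/
noncomputable def reprMul {ι κ : Type*} {a b : H} (r : Coalgebra.Repr k a ι) (s : Coalgebra.Repr k b κ) :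
    Coalgebra.Repr k (a * b) (ι × κ) where
  index := r.index ×ˢ s.index
  left := fun p => r.left p.1 * s.left p.2
  right := fun p => r.right p.1 * s.right p.2
  eq := by
    rw [Bialgebra.comul_mul, ← r.eq, ← s.eq, Finset.sum_mul_sum]
    rw [Finset.sum_product]
    simp [Algebra.TensorProduct.tmul_mul_tmul]

lemma sum_counit_smul_right {ι : Type*} {a : H} (r : Coalgebra.Repr k a ι) :
    ∑ i ∈ r.index, ε (r.left i) • r.right i = a := by
  have h := Coalgebra.sum_counit_tmul_eq (R := k) r
  have h2 := congrArg (TensorProduct.lid k H) h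
  rw [map_sum] at h2
  simp only [TensorProduct.lid_tmul] at h2
  rw [h2, one_smul]

lemma sum_counit_smul_left {ι : Type*} {a : H} (r : Coalgebra.Repr k a ι) :
    ∑ i ∈ r.index, ε (r.right i) • r.left i = a := by
  have h := Coalgebra.sum_tmul_counit_eq (R := k) r
  have h2 := congrArg (TensorProduct.rid k H) h
  rw [map_sum] at h2
  simp only [TensorProduct.rid_tmul] at h2
  rw [h2, one_smul]

/-- the action map: `act f y = ∑ y₁ f(S y₂)` -/
noncomputable def act (f : Module.Dual k H) : H →ₗ[k] H :=
  (TensorProduct.rid k H).toLinearMap ∘ₗ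
    LinearMap.lTensor H (f ∘ₗ S) ∘ₗ Coalgebra.comul

lemma act_repr (f : Module.Dual k H) {ι : Type*} {y : H} (r : Coalgebra.Repr k y ι) :
    act f y = ∑ i ∈ r.index, f (S (r.right i)) • r.left i := by
  rw [act]
  simp only [LinearMap.coe_comp, Function.comp_apply, LinearEquiv.coe_coe, ← r.eq, map_sum]
  simp [TensorProduct.lid_tmul]

lemma act_add (f g : Module.Dual k H) (y : H) : act (f + g) y = act f y + act g y := by
  let r := Coalgebra.Repr.arbitrary k y
  rw [act_repr f r, act_repr g r, act_repr (f + g) r, ← Finset.sum_add_distrib]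
  simp [add_smul]

lemma act_smul (c : k) (f : Module.Dual k H) (y : H) : act (c • f) y = c • act f y := by
  let r := Coalgebra.Repr.arbitrary k y
  rw [act_repr f r, act_repr (c • f) r, Finset.smul_sum]
  simp [smul_smul]

section Collapses

/-- map-level collapse `∑ x₁ ⊗ S(x₂)x₃ = x ⊗ 1` -/
lemma C1 (x : H) :
    (LinearMap.lTensor H (LinearMap.mul' k H ∘ₗ LinearMap.rTensor H S ∘ₗ Coalgebra.comul))
      (Δ x) = x ⊗ₜ[k] 1 := by
  rw [HopfAlgebra.mul_antipode_rTensor_comul, LinearMap.lTensor_comp,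
    LinearMap.comp_apply, Coalgebra.lTensor_counit_comul]
  simp

/-- map-level collapse `∑ x₁ ⊗ x₂S(x₃) = x ⊗ 1` -/
lemma C1' (x : H) :
    (LinearMap.lTensor H (LinearMap.mul' k H ∘ₗ LinearMap.lTensor H S ∘ₗ Coalgebra.comul))
      (Δ x) = x ⊗ₜ[k] 1 := by
  rw [HopfAlgebra.mul_antipode_lTensor_comul, LinearMap.lTensor_comp,
    LinearMap.comp_apply, Coalgebra.lTensor_counit_comul]
  simp

/-- left-nested collapse, antipode on middle leg: `∑ x₁ ⊗ S(x₂)x₃ = x ⊗ 1` -/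
lemma T3L {ι κ : Type*} {n : H} (r : Coalgebra.Repr k n ι) (ri : ∀ i, Coalgebra.Repr k (r.left i) κ) :
    ∑ i ∈ r.index, ∑ j ∈ (ri i).index,
      ((ri i).left j) ⊗ₜ[k] (S ((ri i).right j) * r.right i) = n ⊗ₜ[k] 1 := by
  set Ψ : (H ⊗[k] H) ⊗[k] H →ₗ[k] H ⊗[k] H :=
    (LinearMap.lTensor H (LinearMap.mul' k H ∘ₗ LinearMap.rTensor H S)) ∘ₗ
      (TensorProduct.assoc k H H H).toLinearMap with hΨ
  have hpure : ∀ (a b c : H), Ψ ((a ⊗ₜ b) ⊗ₜ c) = a ⊗ₜ (S b * c) := by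
    intro a b c; simp [hΨ]
  have hξ : ∑ i ∈ r.index, (Δ (r.left i)) ⊗ₜ[k] r.right i
      = (Coalgebra.comul.rTensor H) (Δ n) := by
    rw [← r.eq, map_sum]; simp
  calc ∑ i ∈ r.index, ∑ j ∈ (ri i).index,
        ((ri i).left j) ⊗ₜ[k] (S ((ri i).right j) * r.right i)
      = Ψ (∑ i ∈ r.index, (Δ (r.left i)) ⊗ₜ[k] r.right i) := by
        rw [map_sum]
        refine Finset.sum_congr rfl fun i _ => ?_
        rw [← (ri i).eq, sum_tmul, map_sum]
        exact Finset.sum_congr rfl fun j _ => (hpure _ _ _).symm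
    _ = Ψ ((Coalgebra.comul.rTensor H) (Δ n)) := by rw [hξ]
    _ = n ⊗ₜ[k] 1 := by
        rw [hΨ, LinearMap.comp_apply, LinearEquiv.coe_coe, Coalgebra.coassoc_apply,
          ← LinearMap.comp_apply, ← LinearMap.lTensor_comp, LinearMap.comp_assoc]
        exact C1 n

/-- left-nested collapse, antipode on right leg: `∑ x₁ ⊗ x₂S(x₃) = x ⊗ 1` -/
lemma T3L' {ι κ : Type*} {n : H} (r : Coalgebra.Repr k n ι) (ri : ∀ i, Coalgebra.Repr k (r.left i) κ) :
    ∑ i ∈ r.index, ∑ j ∈ (ri i).index,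
      ((ri i).left j) ⊗ₜ[k] ((ri i).right j * S (r.right i)) = n ⊗ₜ[k] 1 := by
  set Ψ : (H ⊗[k] H) ⊗[k] H →ₗ[k] H ⊗[k] H :=
    (LinearMap.lTensor H (LinearMap.mul' k H ∘ₗ LinearMap.lTensor H S)) ∘ₗ
      (TensorProduct.assoc k H H H).toLinearMap with hΨ
  have hpure : ∀ (a b c : H), Ψ ((a ⊗ₜ b) ⊗ₜ c) = a ⊗ₜ (b * S c) := by
    intro a b c; simp [hΨ]
  have hξ : ∑ i ∈ r.index, (Δ (r.left i)) ⊗ₜ[k] r.right i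
      = (Coalgebra.comul.rTensor H) (Δ n) := by
    rw [← r.eq, map_sum]; simp
  calc ∑ i ∈ r.index, ∑ j ∈ (ri i).index,
        ((ri i).left j) ⊗ₜ[k] ((ri i).right j * S (r.right i))
      = Ψ (∑ i ∈ r.index, (Δ (r.left i)) ⊗ₜ[k] r.right i) := by
        rw [map_sum]
        refine Finset.sum_congr rfl fun i _ => ?_
        rw [← (ri i).eq, sum_tmul, map_sum]
        exact Finset.sum_congr rfl fun j _ => (hpure _ _ _).symm
    _ = Ψ ((Coalgebra.comul.rTensor H) (Δ n)) := by rw [hξ]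
    _ = n ⊗ₜ[k] 1 := by
        rw [hΨ, LinearMap.comp_apply, LinearEquiv.coe_coe, Coalgebra.coassoc_apply,
          ← LinearMap.comp_apply, ← LinearMap.lTensor_comp, LinearMap.comp_assoc]
        exact C1' n

end Collapses

/-- representation of `1` -/
noncomputable def reprOne : Coalgebra.Repr k (1 : H) (Fin 1) where
  index := Finset.univ
  left := fun _ => 1
  right := fun _ => 1
  eq := by simp [Algebra.TensorProduct.one_def]

lemma antipode_one : S (1 : H) = 1 := by
  have h := HopfAlgebra.sum_mul_antipode_eq_algebraMap_counit (R := k) (reprOne (k := k) (H := H))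
  simpa [reprOne] using h

lemma antipode_mul (a b : H) : S (a * b) = S b * S a := by
  classical
  set ra := Coalgebra.Repr.arbitrary k a with hra
  set rb := Coalgebra.Repr.arbitrary k b with hrb
  set rai : ∀ i, Coalgebra.Repr k (ra.left i) (H × H) := fun i => Coalgebra.Repr.arbitrary k _ with hrai
  set rbj : ∀ j, Coalgebra.Repr k (rb.left j) (H × H) := fun j => Coalgebra.Repr.arbitrary k _ with hrbj
  set E1 : H := ∑ i ∈ ra.index, ∑ u ∈ (rai i).index, ∑ j ∈ rb.index, ∑ v ∈ (rbj j).index,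
      (S ((rai i).left u * (rbj j).left v) * ((rai i).right u * (rbj j).right v)) *
        (S (rb.right j) * S (ra.right i)) with hE1
  have evalA : E1 = S b * S a := by
    rw [hE1]
    have inner : ∀ i ∈ ra.index, ∀ j ∈ rb.index,
        (∑ u ∈ (rai i).index, ∑ v ∈ (rbj j).index,
          S ((rai i).left u * (rbj j).left v) * ((rai i).right u * (rbj j).right v))
        = algebraMap k H (ε (ra.left i * rb.left j)) := by
      intro i _ j _
      have h := HopfAlgebra.sum_antipode_mul_eq_algebraMap_counit (R := k) (reprMul (rai i) (rbj j))
      rw [← h, reprMul, Finset.sum_product]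
    calc ∑ i ∈ ra.index, ∑ u ∈ (rai i).index, ∑ j ∈ rb.index, ∑ v ∈ (rbj j).index,
          (S ((rai i).left u * (rbj j).left v) * ((rai i).right u * (rbj j).right v)) *
            (S (rb.right j) * S (ra.right i))
        = ∑ i ∈ ra.index, ∑ j ∈ rb.index,
            (∑ u ∈ (rai i).index, ∑ v ∈ (rbj j).index,
              S ((rai i).left u * (rbj j).left v) * ((rai i).right u * (rbj j).right v)) *
            (S (rb.right j) * S (ra.right i)) := by
          refine Finset.sum_congr rfl fun i _ => ?_
          rw [Finset.sum_comm]
          refine Finset.sum_congr rfl fun j _ => ?_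
          rw [Finset.sum_mul]
          refine Finset.sum_congr rfl fun u _ => ?_
          rw [Finset.sum_mul]
      _ = ∑ i ∈ ra.index, ∑ j ∈ rb.index,
            (ε (ra.left i) * ε (rb.left j)) • (S (rb.right j) * S (ra.right i)) := by
          refine Finset.sum_congr rfl fun i hi => Finset.sum_congr rfl fun j hj => ?_
          rw [inner i hi j hj, Bialgebra.counit_mul, ← Algebra.smul_def]
      _ = S b * S a := by
          have : ∀ i ∈ ra.index,
              (∑ j ∈ rb.index, (ε (ra.left i) * ε (rb.left j)) •
                (S (rb.right j) * S (ra.right i)))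
              = ε (ra.left i) • (S b * S (ra.right i)) := by
            intro i _
            have hb : ∑ j ∈ rb.index, ε (rb.left j) • S (rb.right j) = S b := by
              simp_rw [← map_smul, ← map_sum, sum_counit_smul_right rb]
            calc ∑ j ∈ rb.index, (ε (ra.left i) * ε (rb.left j)) •
                    (S (rb.right j) * S (ra.right i))
                = ε (ra.left i) • ((∑ j ∈ rb.index, ε (rb.left j) • S (rb.right j)) *
                    S (ra.right i)) := by
                  rw [Finset.sum_mul, Finset.smul_sum]
                  refine Finset.sum_congr rfl fun j _ => ?_
                  rw [mul_smul, smul_mul_assoc]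
              _ = ε (ra.left i) • (S b * S (ra.right i)) := by rw [hb]
          rw [Finset.sum_congr rfl this]
          have ha : ∑ i ∈ ra.index, ε (ra.left i) • S (ra.right i) = S a := by
            simp_rw [← map_smul, ← map_sum, sum_counit_smul_right ra]
          rw [← ha, Finset.mul_sum]
          refine Finset.sum_congr rfl fun i _ => ?_
          rw [mul_smul_comm]
  have evalB : E1 = S (a * b) := by
    rw [hE1]
    -- collapse b first
    have hb := T3L' rb rbj
    have stepb : ∀ i ∈ ra.index, ∀ u ∈ (rai i).index,
        (∑ j ∈ rb.index, ∑ v ∈ (rbj j).index,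
          (S ((rai i).left u * (rbj j).left v) * ((rai i).right u * (rbj j).right v)) *
            (S (rb.right j) * S (ra.right i)))
        = S ((rai i).left u * b) * ((rai i).right u * S (ra.right i)) := by
      intro i _ u _
      set Φ : H ⊗[k] H →ₗ[k] H := TensorProduct.lift (LinearMap.mk₂ k
        (fun p q => S ((rai i).left u * p) * ((rai i).right u * q * S (ra.right i)))
        (by intro p p' q; simp [mul_add, add_mul])
        (by intro c p q; simp [mul_smul_comm, smul_mul_assoc, Algebra.mul_smul_comm])
        (by intro p q q'; simp [mul_add, add_mul])
        (by intro c p q; simp [mul_smul_comm, smul_mul_assoc, Algebra.mul_smul_comm]))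
        with hΦ
      have hφ : ∀ p q : H, Φ (p ⊗ₜ q) =
          S ((rai i).left u * p) * ((rai i).right u * q * S (ra.right i)) := by
        intro p q; simp [hΦ]
      calc ∑ j ∈ rb.index, ∑ v ∈ (rbj j).index,
            (S ((rai i).left u * (rbj j).left v) * ((rai i).right u * (rbj j).right v)) *
              (S (rb.right j) * S (ra.right i))
          = Φ (∑ j ∈ rb.index, ∑ v ∈ (rbj j).index,
              ((rbj j).left v) ⊗ₜ[k] ((rbj j).right v * S (rb.right j))) := by
            rw [map_sum]
            refine Finset.sum_congr rfl fun j _ => ?_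
            rw [map_sum]
            refine Finset.sum_congr rfl fun v _ => ?_
            rw [hφ]
            noncomm_ring
        _ = Φ (b ⊗ₜ[k] 1) := by rw [hb]
        _ = S ((rai i).left u * b) * ((rai i).right u * S (ra.right i)) := by
            rw [hφ]; rw [mul_one]
    calc (∑ i ∈ ra.index, ∑ u ∈ (rai i).index, ∑ j ∈ rb.index, ∑ v ∈ (rbj j).index,
          (S ((rai i).left u * (rbj j).left v) * ((rai i).right u * (rbj j).right v)) *
            (S (rb.right j) * S (ra.right i)))
        = ∑ i ∈ ra.index, ∑ u ∈ (rai i).index,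
            S ((rai i).left u * b) * ((rai i).right u * S (ra.right i)) := by
          refine Finset.sum_congr rfl fun i hi => Finset.sum_congr rfl fun u hu => ?_
          exact stepb i hi u hu
      _ = S (a * b) := by
          set Θ : H ⊗[k] H →ₗ[k] H := TensorProduct.lift (LinearMap.mk₂ k
            (fun p q => S (p * b) * q)
            (by intro p p' q; simp [mul_add, add_mul])
            (by intro c p q; simp [smul_mul_assoc, Algebra.mul_smul_comm])
            (by intro p q q'; simp [mul_add])
            (by intro c p q; simp [mul_smul_comm]))
            with hΘ
          have hθ : ∀ p q : H, Θ (p ⊗ₜ q) = S (p * b) * q := by intro p q; simp [hΘ]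
          have ha := T3L' ra rai
          calc ∑ i ∈ ra.index, ∑ u ∈ (rai i).index,
                S ((rai i).left u * b) * ((rai i).right u * S (ra.right i))
              = Θ (∑ i ∈ ra.index, ∑ u ∈ (rai i).index,
                  ((rai i).left u) ⊗ₜ[k] ((rai i).right u * S (ra.right i))) := by
                rw [map_sum]
                refine Finset.sum_congr rfl fun i _ => ?_
                rw [map_sum]
                refine Finset.sum_congr rfl fun u _ => ?_
                rw [hθ]
            _ = Θ (a ⊗ₜ[k] 1) := by rw [ha]
            _ = S (a * b) := by rw [hθ, mul_one]
  rw [← evalA, evalB]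

/-- Hopf module compatibility: `n ⬝ (m ↼ f) = ∑ (n₁ m) ↼ (f ∘ ⬝n₂)` -/
lemma hopf_compat (n m : H) (f : Module.Dual k H) (rn : Coalgebra.Repr k n (H × H)) :
    n * act f m =
      ∑ i ∈ rn.index, act (f ∘ₗ LinearMap.mulRight k (rn.right i)) (rn.left i * m) := by
  classical
  set rm := Coalgebra.Repr.arbitrary k m with hrm
  set rni : ∀ i, Coalgebra.Repr k (rn.left i) (H × H) := fun i => Coalgebra.Repr.arbitrary k _ with hrni
  have expand : ∀ i ∈ rn.index,
      act (f ∘ₗ LinearMap.mulRight k (rn.right i)) (rn.left i * m)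
      = ∑ u ∈ (rni i).index, ∑ s ∈ rm.index,
          f (S (rm.right s) * (S ((rni i).right u) * rn.right i)) •
            ((rni i).left u * rm.left s) := by
    intro i _
    rw [act_repr _ (reprMul (rni i) rm), reprMul, Finset.sum_product]
    refine Finset.sum_congr rfl fun u _ => Finset.sum_congr rfl fun s _ => ?_
    congr 1
    simp only [LinearMap.comp_apply, LinearMap.mulRight_apply]
    rw [antipode_mul, mul_assoc]
  rw [Finset.sum_congr rfl expand]
  -- reorder sums so that s is outermost
  rw [show (∑ i ∈ rn.index, ∑ u ∈ (rni i).index, ∑ s ∈ rm.index,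
        f (S (rm.right s) * (S ((rni i).right u) * rn.right i)) •
          ((rni i).left u * rm.left s))
      = ∑ s ∈ rm.index, ∑ i ∈ rn.index, ∑ u ∈ (rni i).index,
          f (S (rm.right s) * (S ((rni i).right u) * rn.right i)) •
            ((rni i).left u * rm.left s) from by
    rw [Finset.sum_congr rfl fun i (_ : i ∈ rn.index) => Finset.sum_comm, Finset.sum_comm]]
  have key : ∀ s ∈ rm.index,
      (∑ i ∈ rn.index, ∑ u ∈ (rni i).index,
        f (S (rm.right s) * (S ((rni i).right u) * rn.right i)) •
          ((rni i).left u * rm.left s))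
      = f (S (rm.right s)) • (n * rm.left s) := by
    intro s _
    set Θ : H ⊗[k] H →ₗ[k] H := TensorProduct.lift (LinearMap.mk₂ k
      (fun p q => f (S (rm.right s) * q) • (p * rm.left s))
      (by intro p p' q; simp [add_mul, smul_add])
      (by intro c p q; rw [smul_mul_assoc, smul_comm])
      (by intro p q q'; simp [mul_add, add_smul, smul_add])
      (by intro c p q; rw [mul_smul_comm, map_smul, smul_eq_mul, mul_smul])) with hΘ
    have hθ : ∀ p q : H, Θ (p ⊗ₜ q) = f (S (rm.right s) * q) • (p * rm.left s) := by
      intro p q; simp [hΘ]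
    calc ∑ i ∈ rn.index, ∑ u ∈ (rni i).index,
          f (S (rm.right s) * (S ((rni i).right u) * rn.right i)) •
            ((rni i).left u * rm.left s)
        = Θ (∑ i ∈ rn.index, ∑ u ∈ (rni i).index,
            ((rni i).left u) ⊗ₜ[k] (S ((rni i).right u) * rn.right i)) := by
          rw [map_sum]
          refine Finset.sum_congr rfl fun i _ => ?_
          rw [map_sum]
          exact Finset.sum_congr rfl fun u _ => (hθ _ _).symm
      _ = Θ (n ⊗ₜ[k] 1) := by rw [T3L rn rni]
      _ = f (S (rm.right s)) • (n * rm.left s) := by rw [hθ, mul_one]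
  rw [Finset.sum_congr rfl key, act_repr f rm, Finset.mul_sum]
  exact Finset.sum_congr rfl fun s _ => by rw [mul_smul_comm]

section Basis

variable [FiniteDimensional k H]

end Basis

/-- fixed basis -/
noncomputable def bs (k H : Type*) [Field k] [Ring H] [HopfAlgebra k H]
    [FiniteDimensional k H] : Module.Basis (Fin (Module.finrank k H)) k H := Module.finBasis k H

section Basis

variable [FiniteDimensional k H]

/-- slide an operator through the canonical element `∑ bᵢ ⊗ bⁱ` -/
lemma contr_slide {V : Type*} [AddCommMonoid V] [Module k V]
    (Φ : H →ₗ[k] Module.Dual k H →ₗ[k] V) (T : H →ₗ[k] H) :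
    ∑ i, Φ (T ((bs k H) i)) ((bs k H).coord i) = ∑ i, Φ ((bs k H) i) ((bs k H).coord i ∘ₗ T) := by
  have lhs : ∀ i, Φ (T ((bs k H) i)) ((bs k H).coord i)
      = ∑ m, (bs k H).repr (T ((bs k H) i)) m • Φ ((bs k H) m) ((bs k H).coord i) := by
    intro i
    conv_lhs => rw [← Module.Basis.sum_repr (bs k H) (T ((bs k H) i))]
    rw [map_sum, LinearMap.sum_apply]
    exact Finset.sum_congr rfl fun m _ => by rw [map_smul, LinearMap.smul_apply]
  have rhs : ∀ i, Φ ((bs k H) i) ((bs k H).coord i ∘ₗ T)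
      = ∑ m, (bs k H).repr (T ((bs k H) m)) i • Φ ((bs k H) i) ((bs k H).coord m) := by
    intro i
    have h1 : (bs k H).coord i ∘ₗ T = ∑ m, (bs k H).repr (T ((bs k H) m)) i • ((bs k H).coord m) := by
      have h2 := Module.Basis.sum_dual_apply_smul_coord (bs k H) ((bs k H).coord i ∘ₗ T)
      rw [← h2]
      exact Finset.sum_congr rfl fun m _ => by
        simp [Module.Basis.coord_apply]
    rw [h1, map_sum]
    exact Finset.sum_congr rfl fun m _ => by rw [map_smul]
  rw [Finset.sum_congr rfl fun i _ => lhs i, Finset.sum_congr rfl fun i _ => rhs i,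
    Finset.sum_comm]

lemma contract_one (f : Module.Dual k H) (A B : H) :
    ∑ j, (bs k H).coord j B * f (A * (bs k H) j) = f (A * B) := by
  conv_rhs => rw [← Module.Basis.sum_repr (bs k H) B]
  rw [Finset.mul_sum, map_sum]
  exact Finset.sum_congr rfl fun j _ => by
    rw [mul_smul_comm, map_smul, Module.Basis.coord_apply, smul_eq_mul]

lemma contract_two (φ : Module.Dual k H) (A B : H) :
    ∑ j, ∑ i, ((bs k H).coord j A * (bs k H).coord i B) * φ ((bs k H) j * (bs k H) i) = φ (A * B) := by
  conv_rhs => rw [← Module.Basis.sum_repr (bs k H) A, ← Module.Basis.sum_repr (bs k H) B, Finset.sum_mul_sum]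
  rw [map_sum]
  refine Finset.sum_congr rfl fun j _ => ?_
  rw [map_sum]
  refine Finset.sum_congr rfl fun i _ => ?_
  rw [smul_mul_smul_comm, map_smul, smul_eq_mul, Module.Basis.coord_apply, Module.Basis.coord_apply]

/-- the averaging projector onto left integrals -/
noncomputable def EE : H →ₗ[k] H :=
  ∑ i, (act ((bs k H).coord i ∘ₗ S)) ∘ₗ (LinearMap.mulLeft k ((bs k H) i))

lemma EE_apply (x : H) :
    EE (k := k) (H := H) x = ∑ i, act ((bs k H).coord i ∘ₗ S) ((bs k H) i * x) := by
  rw [EE, LinearMap.sum_apply]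
  rfl

end Basis

section Main

variable [FiniteDimensional k H]

lemma EE_integral (h x : H) :
    h * EE (k := k) (H := H) x = ε h • EE (k := k) (H := H) x := by
  classical
  set rh := Coalgebra.Repr.arbitrary k h with hrh
  rw [EE_apply, Finset.mul_sum]
  have step1 : ∀ i : Fin (Module.finrank k H),
      h * act ((bs k H).coord i ∘ₗ S) ((bs k H) i * x)
      = ∑ t ∈ rh.index,
          act ((((bs k H).coord i) ∘ₗ LinearMap.mulLeft k (S (rh.right t))) ∘ₗ S)
            ((rh.left t * (bs k H) i) * x) := by
    intro i
    rw [hopf_compat _ _ _ rh]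
    refine Finset.sum_congr rfl fun t _ => ?_
    have hf : ((bs k H).coord i ∘ₗ S) ∘ₗ LinearMap.mulRight k (rh.right t)
        = (((bs k H).coord i) ∘ₗ LinearMap.mulLeft k (S (rh.right t))) ∘ₗ S := by
      ext y
      simp [antipode_mul]
    rw [hf, mul_assoc]
  rw [Finset.sum_congr rfl fun i _ => step1 i, Finset.sum_comm]
  -- slide the basis contraction
  have step2 : ∀ t ∈ rh.index,
      (∑ i, act ((((bs k H).coord i) ∘ₗ LinearMap.mulLeft k (S (rh.right t))) ∘ₗ S)
          ((rh.left t * (bs k H) i) * x))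
      = ∑ i, act ((bs k H).coord i ∘ₗ S)
          (((rh.left t * S (rh.right t)) * (bs k H) i) * x) := by
    intro t _
    set Φ : H →ₗ[k] Module.Dual k H →ₗ[k] H := LinearMap.mk₂ k
      (fun v φ => act (φ ∘ₗ S) ((rh.left t * v) * x))
      (by intro v v' φ; rw [mul_add, add_mul, map_add])
      (by intro c v φ; rw [mul_smul_comm, smul_mul_assoc, map_smul])
      (by intro v φ φ'; rw [LinearMap.add_comp, act_add])
      (by intro c v φ; rw [LinearMap.smul_comp, act_smul]) with hΦ
    have lhs_eq : ∀ i : Fin (Module.finrank k H),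
        act ((((bs k H).coord i) ∘ₗ LinearMap.mulLeft k (S (rh.right t))) ∘ₗ S)
          ((rh.left t * (bs k H) i) * x)
        = Φ ((bs k H) i) ((bs k H).coord i ∘ₗ LinearMap.mulLeft k (S (rh.right t))) := by
      intro i; simp [hΦ]
    rw [Finset.sum_congr rfl fun i _ => lhs_eq i,
      ← contr_slide Φ (LinearMap.mulLeft k (S (rh.right t)))]
    refine Finset.sum_congr rfl fun i _ => ?_
    simp only [hΦ, LinearMap.mk₂_apply, LinearMap.mulLeft_apply, mul_assoc]
  rw [Finset.sum_congr rfl step2]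
  -- now collapse ∑ h₁ S(h₂) = ε h
  set Ψ : H →ₗ[k] H :=
    ∑ i, (act ((bs k H).coord i ∘ₗ S)) ∘ₗ (LinearMap.mulRight k ((bs k H) i * x)) with hΨ
  have hPsiApp : ∀ w : H, Ψ w = ∑ i, act ((bs k H).coord i ∘ₗ S) ((w * (bs k H) i) * x) := by
    intro w
    rw [hΨ, LinearMap.sum_apply]
    exact Finset.sum_congr rfl fun i _ => by
      simp [mul_assoc]
  calc ∑ t ∈ rh.index, ∑ i, act ((bs k H).coord i ∘ₗ S)
          (((rh.left t * S (rh.right t)) * (bs k H) i) * x)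
      = ∑ t ∈ rh.index, Ψ (rh.left t * S (rh.right t)) := by
        exact Finset.sum_congr rfl fun t _ => (hPsiApp _).symm
    _ = Ψ (∑ t ∈ rh.index, rh.left t * S (rh.right t)) := by rw [map_sum]
    _ = Ψ (algebraMap k H (ε h)) := by rw [HopfAlgebra.sum_mul_antipode_eq_algebraMap_counit rh]
    _ = ε h • Ψ 1 := by
        rw [Algebra.algebraMap_eq_smul_one, map_smul]
    _ = ε h • ∑ i, act ((bs k H).coord i ∘ₗ S) ((bs k H) i * x) := by
        rw [hPsiApp 1]
        congr 1
        exact Finset.sum_congr rfl fun i _ => by rw [one_mul]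

lemma act_integral {μ : H} (hμ : ∀ h : H, h * μ = ε h • μ) (n : H) (f : Module.Dual k H) :
    n * act f μ = act (f ∘ₗ LinearMap.mulRight k n) μ := by
  classical
  set rn := Coalgebra.Repr.arbitrary k n with hrn
  set rμ := Coalgebra.Repr.arbitrary k μ with hrμ
  rw [hopf_compat _ _ _ rn]
  have e1 : ∀ t ∈ rn.index,
      act (f ∘ₗ LinearMap.mulRight k (rn.right t)) (rn.left t * μ)
      = ∑ s ∈ rμ.index, (ε (rn.left t) * f (S (rμ.right s) * rn.right t)) • rμ.left s := by
    intro t _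
    rw [hμ, map_smul, act_repr _ rμ, Finset.smul_sum]
    refine Finset.sum_congr rfl fun s _ => ?_
    rw [smul_smul]
    rfl
  rw [Finset.sum_congr rfl e1, Finset.sum_comm, act_repr _ rμ]
  refine Finset.sum_congr rfl fun s _ => ?_
  have e2 : ∑ t ∈ rn.index, ε (rn.left t) * f (S (rμ.right s) * rn.right t)
      = f (S (rμ.right s) * n) := by
    conv_rhs => rw [← sum_counit_smul_right rn]
    rw [Finset.mul_sum, map_sum]
    refine Finset.sum_congr rfl fun t _ => ?_
    rw [mul_smul_comm, map_smul, smul_eq_mul]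
  rw [← Finset.sum_smul, e2]
  simp

lemma EE_act {μ : H} (hμ : ∀ h : H, h * μ = ε h • μ) (f : Module.Dual k H) :
    EE (k := k) (H := H) (act f μ) = f 1 • μ := by
  classical
  set rμ := Coalgebra.Repr.arbitrary k μ with hrμ
  set rt : ∀ t, Coalgebra.Repr k (rμ.left t) (H × H) := fun t => Coalgebra.Repr.arbitrary k _ with hrt
  rw [EE_apply]
  have step1 : ∀ j : Fin (Module.finrank k H),
      act ((bs k H).coord j ∘ₗ S) ((bs k H) j * act f μ)
      = ∑ t ∈ rμ.index, ∑ u ∈ (rt t).index,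
          (f (S (rμ.right t) * (bs k H) j) * (bs k H).coord j (S (S ((rt t).right u)))) •
            (rt t).left u := by
    intro j
    rw [act_integral hμ, act_repr _ rμ, map_sum]
    refine Finset.sum_congr rfl fun t _ => ?_
    rw [map_smul, act_repr _ (rt t), Finset.smul_sum]
    refine Finset.sum_congr rfl fun u _ => ?_
    rw [smul_smul]
    rfl
  rw [Finset.sum_congr rfl fun j _ => step1 j, Finset.sum_comm]
  have step2 : ∀ t ∈ rμ.index,
      (∑ j : Fin (Module.finrank k H), ∑ u ∈ (rt t).index,
        (f (S (rμ.right t) * (bs k H) j) * (bs k H).coord j (S (S ((rt t).right u)))) •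
          (rt t).left u)
      = ∑ u ∈ (rt t).index,
          f (S (S ((rt t).right u) * rμ.right t)) • (rt t).left u := by
    intro t _
    rw [Finset.sum_comm]
    refine Finset.sum_congr rfl fun u _ => ?_
    rw [← Finset.sum_smul]
    congr 1
    calc ∑ j : Fin (Module.finrank k H),
          f (S (rμ.right t) * (bs k H) j) * (bs k H).coord j (S (S ((rt t).right u)))
        = ∑ j : Fin (Module.finrank k H),
            (bs k H).coord j (S (S ((rt t).right u))) * f (S (rμ.right t) * (bs k H) j) :=
          Finset.sum_congr rfl fun j _ => mul_comm _ _
      _ = f (S (rμ.right t) * S (S ((rt t).right u))) :=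
          contract_one (k := k) (H := H) f _ _
      _ = f (S (S ((rt t).right u) * rμ.right t)) := by rw [antipode_mul]
  rw [Finset.sum_congr rfl step2]
  -- final collapse via T3L
  set Θ : H ⊗[k] H →ₗ[k] H := TensorProduct.lift (LinearMap.mk₂ k
    (fun p q => f (S q) • p)
    (by intro p p' q; rw [smul_add])
    (by intro c p q; rw [smul_comm])
    (by intro p q q'; rw [map_add, map_add, add_smul])
    (by intro c p q; rw [map_smul, map_smul, smul_eq_mul, mul_smul])) with hΘ
  have hθ : ∀ p q : H, Θ (p ⊗ₜ q) = f (S q) • p := by intro p q; simp [hΘ]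
  calc ∑ t ∈ rμ.index, ∑ u ∈ (rt t).index,
        f (S (S ((rt t).right u) * rμ.right t)) • (rt t).left u
      = Θ (∑ t ∈ rμ.index, ∑ u ∈ (rt t).index,
          ((rt t).left u) ⊗ₜ[k] (S ((rt t).right u) * rμ.right t)) := by
        rw [map_sum]
        refine Finset.sum_congr rfl fun t _ => ?_
        rw [map_sum]
        exact Finset.sum_congr rfl fun u _ => (hθ _ _).symm
    _ = Θ (μ ⊗ₜ[k] 1) := by rw [T3L rμ rt]
    _ = f 1 • μ := by rw [hθ, antipode_one]

lemma act_EE (x : H) :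
    ∑ i, act ((bs k H).coord i) (EE (k := k) (H := H) ((bs k H) i * x)) = x := by
  classical
  set rm : ∀ m : Fin (Module.finrank k H), Coalgebra.Repr k ((bs k H) m * x) (H × H) :=
    fun m => Coalgebra.Repr.arbitrary k _ with hrm
  set rtm : ∀ m t, Coalgebra.Repr k ((rm m).left t) (H × H) :=
    fun m t => Coalgebra.Repr.arbitrary k _ with hrtm
  -- step A : expand EE and the product of basis vectors
  have stepA : ∀ i : Fin (Module.finrank k H),
      act ((bs k H).coord i) (EE (k := k) (H := H) ((bs k H) i * x))
      = ∑ j, ∑ m, ((bs k H).coord m ((bs k H) j * (bs k H) i)) •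
          act ((bs k H).coord i) (act ((bs k H).coord j ∘ₗ S) ((bs k H) m * x)) := by
    intro i
    rw [EE_apply, map_sum]
    refine Finset.sum_congr rfl fun j _ => ?_
    have h1 : (bs k H) j * ((bs k H) i * x) = ((bs k H) j * (bs k H) i) * x := by
      rw [mul_assoc]
    rw [h1]
    have h2 : ((bs k H) j * (bs k H) i) * x
        = ∑ m, ((bs k H).coord m ((bs k H) j * (bs k H) i)) • ((bs k H) m * x) := by
      conv_lhs => rw [← Module.Basis.sum_repr (bs k H) ((bs k H) j * (bs k H) i)]
      rw [Finset.sum_mul]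
      exact Finset.sum_congr rfl fun m _ => by rw [smul_mul_assoc, Module.Basis.coord_apply]
    rw [h2, map_sum, map_sum]
    exact Finset.sum_congr rfl fun m _ => by rw [map_smul, map_smul]
  rw [Finset.sum_congr rfl fun i _ => stepA i]
  -- reorder so that m is outermost
  rw [show (∑ i, ∑ j, ∑ m, ((bs k H).coord m ((bs k H) j * (bs k H) i)) •
        act ((bs k H).coord i) (act ((bs k H).coord j ∘ₗ S) ((bs k H) m * x)))
      = ∑ m, ∑ j, ∑ i, ((bs k H).coord m ((bs k H) j * (bs k H) i)) •
        act ((bs k H).coord i) (act ((bs k H).coord j ∘ₗ S) ((bs k H) m * x)) from by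
    exact (Finset.sum_congr rfl fun i _ => Finset.sum_comm).trans
      (Finset.sum_comm.trans (Finset.sum_congr rfl fun m _ => Finset.sum_comm))]
  -- per-m computation
  have claimM : ∀ m : Fin (Module.finrank k H),
      (∑ j, ∑ i, ((bs k H).coord m ((bs k H) j * (bs k H) i)) •
        act ((bs k H).coord i) (act ((bs k H).coord j ∘ₗ S) ((bs k H) m * x)))
      = ((bs k H).coord m 1) • ((bs k H) m * x) := by
    intro m
    -- expand the double action
    have inner : ∀ (i j : Fin (Module.finrank k H)),
        act ((bs k H).coord i) (act ((bs k H).coord j ∘ₗ S) ((bs k H) m * x))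
        = ∑ t ∈ (rm m).index, ∑ u ∈ (rtm m t).index,
            ((bs k H).coord j (S (S ((rm m).right t))) *
              (bs k H).coord i (S ((rtm m t).right u))) • (rtm m t).left u := by
      intro i j
      rw [act_repr _ (rm m), map_sum]
      refine Finset.sum_congr rfl fun t _ => ?_
      rw [map_smul, act_repr _ (rtm m t), Finset.smul_sum]
      refine Finset.sum_congr rfl fun u _ => ?_
      rw [smul_smul]
      rfl
    calc ∑ j, ∑ i, ((bs k H).coord m ((bs k H) j * (bs k H) i)) •
          act ((bs k H).coord i) (act ((bs k H).coord j ∘ₗ S) ((bs k H) m * x))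
        = ∑ j, ∑ i, ∑ t ∈ (rm m).index, ∑ u ∈ (rtm m t).index,
            (((bs k H).coord j (S (S ((rm m).right t))) *
              (bs k H).coord i (S ((rtm m t).right u))) *
                (bs k H).coord m ((bs k H) j * (bs k H) i)) • (rtm m t).left u := by
          refine Finset.sum_congr rfl fun j _ => Finset.sum_congr rfl fun i _ => ?_
          rw [inner i j, Finset.smul_sum]
          refine Finset.sum_congr rfl fun t _ => ?_
          rw [Finset.smul_sum]
          refine Finset.sum_congr rfl fun u _ => ?_
          rw [smul_smul, mul_comm]
      _ = ∑ t ∈ (rm m).index, ∑ u ∈ (rtm m t).index, ∑ j, ∑ i,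
            (((bs k H).coord j (S (S ((rm m).right t))) *
              (bs k H).coord i (S ((rtm m t).right u))) *
                (bs k H).coord m ((bs k H) j * (bs k H) i)) • (rtm m t).left u := by
          exact (Finset.sum_congr rfl fun j _ => Finset.sum_comm).trans
            ((Finset.sum_congr rfl fun j _ =>
                Finset.sum_congr rfl fun t _ => Finset.sum_comm).trans
              (Finset.sum_comm.trans (Finset.sum_congr rfl fun t _ => Finset.sum_comm)))
      _ = ∑ t ∈ (rm m).index, ∑ u ∈ (rtm m t).index,
            ((bs k H).coord m (S ((rtm m t).right u * S ((rm m).right t)))) •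
              (rtm m t).left u := by
          refine Finset.sum_congr rfl fun t _ => Finset.sum_congr rfl fun u _ => ?_
          rw [show (∑ j, ∑ i : Fin (Module.finrank k H),
              (((bs k H).coord j (S (S ((rm m).right t))) *
                (bs k H).coord i (S ((rtm m t).right u))) *
                  (bs k H).coord m ((bs k H) j * (bs k H) i)) • (rtm m t).left u)
            = (∑ j, ∑ i : Fin (Module.finrank k H),
              (((bs k H).coord j (S (S ((rm m).right t))) *
                (bs k H).coord i (S ((rtm m t).right u))) *
                  (bs k H).coord m ((bs k H) j * (bs k H) i))) • (rtm m t).left u from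
            ((Finset.sum_congr rfl fun j _ => (Finset.sum_smul).symm).trans
              (Finset.sum_smul).symm)]
          congr 1
          calc ∑ j, ∑ i, (((bs k H).coord j (S (S ((rm m).right t))) *
                (bs k H).coord i (S ((rtm m t).right u))) *
                  (bs k H).coord m ((bs k H) j * (bs k H) i))
              = (bs k H).coord m
                  (S (S ((rm m).right t)) * S ((rtm m t).right u)) :=
                contract_two ((bs k H).coord m) _ _
            _ = (bs k H).coord m (S ((rtm m t).right u * S ((rm m).right t))) := by
                rw [antipode_mul]
      _ = ((bs k H).coord m 1) • ((bs k H) m * x) := by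
          set Θ : H ⊗[k] H →ₗ[k] H := TensorProduct.lift (LinearMap.mk₂ k
            (fun p q => ((bs k H).coord m (S q)) • p)
            (by intro p p' q; rw [smul_add])
            (by intro c p q; rw [smul_comm])
            (by intro p q q'; rw [map_add, map_add, add_smul])
            (by intro c p q;
                rw [map_smul, map_smul, smul_eq_mul, mul_smul])) with hΘ
          have hθ : ∀ p q : H, Θ (p ⊗ₜ q) = ((bs k H).coord m (S q)) • p := by
            intro p q; simp [hΘ]
          calc ∑ t ∈ (rm m).index, ∑ u ∈ (rtm m t).index,
                ((bs k H).coord m (S ((rtm m t).right u * S ((rm m).right t)))) •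
                  (rtm m t).left u
              = Θ (∑ t ∈ (rm m).index, ∑ u ∈ (rtm m t).index,
                  ((rtm m t).left u) ⊗ₜ[k] ((rtm m t).right u * S ((rm m).right t))) := by
                rw [map_sum]
                refine Finset.sum_congr rfl fun t _ => ?_
                rw [map_sum]
                exact Finset.sum_congr rfl fun u _ => (hθ _ _).symm
            _ = Θ (((bs k H) m * x) ⊗ₜ[k] 1) := by rw [T3L' (rm m) (rtm m)]
            _ = ((bs k H).coord m 1) • ((bs k H) m * x) := by rw [hθ, antipode_one]
  rw [Finset.sum_congr rfl fun m _ => claimM m]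
  have final : ∑ m, ((bs k H).coord m 1) • ((bs k H) m * x) = 1 * x := by
    conv_rhs => rw [show (1 : H) = ∑ m, ((bs k H).coord m 1) • (bs k H) m from by
      simp only [Module.Basis.coord_apply]
      exact (Module.Basis.sum_repr (bs k H) 1).symm]
    rw [Finset.sum_mul]
    exact Finset.sum_congr rfl fun m _ => by rw [smul_mul_assoc]
  rw [final, one_mul]

end Main

end LeftIntegralsProof

open LeftIntegralsProof in
/-- The space of left integrals of a finite-dimensional Hopf algebra is one-dimensional. -/
theorem left_integrals_one_dimensional {k H : Type*} [Field k] [Ring H] [HopfAlgebra k H]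
    [FiniteDimensional k H] :
    Module.finrank k
      ({ carrier := {μ : H | ∀ h : H, h * μ = Coalgebra.counit (R := k) h • μ}
         add_mem' := by
           intro a b ha hb h
           simp [mul_add, ha h, hb h, smul_add]
         zero_mem' := by intro h; simp
         smul_mem' := by
           intro c x hx h
           rw [mul_smul_comm, hx h, smul_comm] } : Submodule k H) = 1 := by
  classical
  set V : Submodule k H :=
      { carrier := {μ : H | ∀ h : H, h * μ = Coalgebra.counit (R := k) h • μ}
        add_mem' := by
          intro a b ha hb h
          simp [mul_add, ha h, hb h, smul_add]
        zero_mem' := by intro h; simp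
        smul_mem' := by
          intro c x hx h
          rw [mul_smul_comm, hx h, smul_comm] } with hV
  have memV : ∀ {μ : H}, μ ∈ V ↔ ∀ h : H, h * μ = Coalgebra.counit (R := k) h • μ :=
    fun {μ} => Iff.rfl
  -- the corestricted projector
  have hEEmem : ∀ x : H, EE (k := k) (H := H) x ∈ V := fun x => by
    rw [memV]; exact fun h => EE_integral h x
  set Ebar : H →ₗ[k] V := (EE (k := k) (H := H)).codRestrict V hEEmem with hEbar
  -- the forward map
  set α : V ⊗[k] Module.Dual k H →ₗ[k] H := TensorProduct.lift (LinearMap.mk₂ k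
    (fun (μ : V) (f : Module.Dual k H) => act f (μ : H))
    (by intro μ μ' f; simp)
    (by intro c μ f; simp)
    (by intro μ f f'; exact act_add f f' _)
    (by intro c μ f; exact act_smul c f _)) with hα
  have hαpure : ∀ (μ : V) (f : Module.Dual k H), α (μ ⊗ₜ f) = act f (μ : H) := by
    intro μ f; simp [hα]
  set β : H →ₗ[k] V ⊗[k] Module.Dual k H :=
    ∑ i, ((TensorProduct.mk k V (Module.Dual k H)).flip ((bs k H).coord i)) ∘ₗ
      Ebar ∘ₗ LinearMap.mulLeft k ((bs k H) i) with hβ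
  have hβapp : ∀ x : H, β x = ∑ i, (Ebar ((bs k H) i * x)) ⊗ₜ[k] ((bs k H).coord i) := by
    intro x
    rw [hβ, LinearMap.sum_apply]
    rfl
  have hαβ : ∀ x : H, α (β x) = x := by
    intro x
    rw [hβapp, map_sum]
    have : ∀ i : Fin (Module.finrank k H),
        α ((Ebar ((bs k H) i * x)) ⊗ₜ[k] ((bs k H).coord i))
        = act ((bs k H).coord i) (EE (k := k) (H := H) ((bs k H) i * x)) := by
      intro i
      rw [hαpure]
      rfl
    rw [Finset.sum_congr rfl fun i _ => this i]
    exact act_EE x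
  have hβα : ∀ z : V ⊗[k] Module.Dual k H, β (α z) = z := by
    have : β ∘ₗ α = LinearMap.id := by
      apply TensorProduct.ext'
      intro μ f
      have hμ : ∀ h : H, h * (μ : H) = Coalgebra.counit (R := k) h • (μ : H) := memV.mp μ.2
      rw [LinearMap.comp_apply, hαpure, hβapp, LinearMap.id_apply]
      have e1 : ∀ i : Fin (Module.finrank k H),
          Ebar ((bs k H) i * act f (μ : H)) = f ((bs k H) i) • μ := by
        intro i
        apply Subtype.ext
        have : (bs k H) i * act f (μ : H) = act (f ∘ₗ LinearMap.mulRight k ((bs k H) i)) μ :=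
          act_integral hμ _ f
        calc (Ebar ((bs k H) i * act f (μ : H)) : H)
            = EE (k := k) (H := H) ((bs k H) i * act f (μ : H)) := rfl
          _ = EE (k := k) (H := H) (act (f ∘ₗ LinearMap.mulRight k ((bs k H) i)) μ) := by
              rw [this]
          _ = (f ∘ₗ LinearMap.mulRight k ((bs k H) i)) 1 • (μ : H) := EE_act hμ _
          _ = f ((bs k H) i) • (μ : H) := by simp
          _ = ((f ((bs k H) i) • μ : V) : H) := rfl
      rw [Finset.sum_congr rfl fun i _ => by rw [e1 i]]
      calc ∑ i, (f ((bs k H) i) • μ) ⊗ₜ[k] ((bs k H).coord i)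
          = ∑ i, μ ⊗ₜ[k] (f ((bs k H) i) • (bs k H).coord i) := by
            exact Finset.sum_congr rfl fun i _ => (TensorProduct.smul_tmul _ _ _)
        _ = μ ⊗ₜ[k] (∑ i, f ((bs k H) i) • (bs k H).coord i) := by
            rw [TensorProduct.tmul_sum]
        _ = μ ⊗ₜ[k] f := by rw [Module.Basis.sum_dual_apply_smul_coord]
    intro z
    exact LinearMap.congr_fun this z
  have e : (V ⊗[k] Module.Dual k H) ≃ₗ[k] H :=
    LinearEquiv.ofLinear α β (LinearMap.ext hαβ) (LinearMap.ext hβα)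
  have hnontriv : Nontrivial H := by
    refine ⟨1, 0, fun h01 => ?_⟩
    have : (1 : k) = 0 := by
      rw [← Bialgebra.counit_one (R := k) (A := H), h01, map_zero]
    exact one_ne_zero this
  have hrank : Module.finrank k V * Module.finrank k H = Module.finrank k H := by
    have h1 : Module.finrank k (V ⊗[k] Module.Dual k H) = Module.finrank k H :=
      LinearEquiv.finrank_eq e
    rw [Module.finrank_tensorProduct, Subspace.dual_finrank_eq] at h1
    exact h1
  have hpos : 0 < Module.finrank k H := Module.finrank_pos
  have := Nat.eq_of_mul_eq_mul_right hpos (hrank.trans (one_mul _).symm)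
  exact this
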